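/- Let ρ_i(λ) = (−1)^i σ_i(λ_1,…,λ_n) where σ_i is the i-th elementary symmetric polynomial, let R be the n×n companion-type matrix with first column (−ρ_1,…,−ρ_n)^T, superdiagonal entries 1 and all other entries 0, and define V^{(β)} = R^β V^{(0)} with V^{(0)} = (0,…,0,−1)^T, for β ∈ ℤ (using R^{-1} for negative β, assuming ρ_n ≠ 0). Then for every β ∈ ℤ, the components V_j^{(β)} satisfy the n identities λ_i^β + Σ_{j=1}^n V_j^{(β)} λ_i^{n−j} = 0 for i = 1,…,n, provided the λ_i are pairwise distinct. -/

import Mathlib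

open scoped BigOperators Matrix

/-- The `i`-th elementary symmetric polynomial of `l 0, …, l (n-1)`. -/
noncomputable def esym (n : ℕ) (l : Fin n → ℝ) (i : ℕ) : ℝ :=
  ∑ t ∈ Finset.powersetCard i (Finset.univ : Finset (Fin n)), ∏ j ∈ t, l j

/-- The Benenti recursion matrix `R` (eq. (6a)): first column `(-ρ₁,…,-ρ_n)ᵀ`
with `ρ_i = (-1)^i σ_i`, superdiagonal entries `1`, all other entries `0`. -/
noncomputable def benentiR (n : ℕ) (l : Fin n → ℝ) : Matrix (Fin n) (Fin n) ℝ :=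
  fun i j =>
    if (j : ℕ) = 0 then -((-1 : ℝ) ^ ((i : ℕ) + 1) * esym n l ((i : ℕ) + 1))
    else if (j : ℕ) = (i : ℕ) + 1 then 1 else 0

/-- `V⁽⁰⁾ = (0,…,0,-1)ᵀ`. -/
noncomputable def benentiV0 (n : ℕ) : Fin n → ℝ :=
  fun j => if (j : ℕ) = n - 1 then -1 else 0

/-- The reversed Vandermonde matrix `M i j = l i ^ (n-1-j)`. -/
noncomputable def benentiM (n : ℕ) (l : Fin n → ℝ) : Matrix (Fin n) (Fin n) ℝ :=
  fun i j => l i ^ (n - 1 - (j : ℕ))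

open Polynomial in
lemma charId (n : ℕ) (l : Fin n → ℝ) (i : Fin n) :
    ∑ j ∈ Finset.range (n + 1), (-1 : ℝ) ^ j * (esym n l j * (l i) ^ (n - j)) = 0 := by
  have h := Multiset.prod_X_sub_X_eq_sum_esymm ((Finset.univ.val : Multiset (Fin n)).map l)
  have hcard : Multiset.card ((Finset.univ.val : Multiset (Fin n)).map l) = n := by simp
  have h2 := congrArg (Polynomial.eval (l i)) h
  rw [hcard] at h2
  have hL : Polynomial.eval (l i)
      ((((Finset.univ.val : Multiset (Fin n)).map l).map fun t => X - C t).prod) = 0 := by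
    rw [Polynomial.eval_multiset_prod, Multiset.map_map, Multiset.map_map]
    refine Multiset.prod_eq_zero ?_
    refine Multiset.mem_map.mpr ⟨i, Finset.mem_univ_val i, ?_⟩
    simp
  have hR : Polynomial.eval (l i)
      (∑ j ∈ Finset.range (n + 1),
        (-1 : Polynomial ℝ) ^ j *
          (C (((Finset.univ.val : Multiset (Fin n)).map l).esymm j) * X ^ (n - j))) =
      ∑ j ∈ Finset.range (n + 1), (-1 : ℝ) ^ j * (esym n l j * (l i) ^ (n - j)) := by
    rw [Polynomial.eval_finset_sum]
    refine Finset.sum_congr rfl fun j _ => ?_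
    have he : (((Finset.univ : Finset (Fin n)).val).map l).esymm j = esym n l j := by
      rw [Finset.esymm_map_val]
      rfl
    simp only [Polynomial.eval_mul, Polynomial.eval_pow, Polynomial.eval_neg,
      Polynomial.eval_one, Polynomial.eval_C, Polynomial.eval_X, he]
  rw [hL, hR] at h2
  exact h2.symm

lemma esym_zero (n : ℕ) (l : Fin n → ℝ) : esym n l 0 = 1 := by
  simp [esym]

lemma keyPow (n : ℕ) (l : Fin n → ℝ) (i : Fin n) :
    (l i) ^ n =
      ∑ j : Fin n, -((-1 : ℝ) ^ ((j : ℕ) + 1) * esym n l ((j : ℕ) + 1)) *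
        (l i) ^ (n - 1 - (j : ℕ)) := by
  have h := charId n l i
  rw [Finset.sum_range_succ'] at h
  simp only [pow_zero, one_mul, esym_zero, Nat.sub_zero] at h
  rw [← Finset.sum_range fun j => -((-1 : ℝ) ^ (j + 1) * esym n l (j + 1)) *
      (l i) ^ (n - 1 - j)]
  have : ∀ j ∈ Finset.range n,
      -((-1 : ℝ) ^ (j + 1) * esym n l (j + 1)) * (l i) ^ (n - 1 - j) =
      -((-1 : ℝ) ^ (j + 1) * (esym n l (j + 1) * (l i) ^ (n - (j + 1)))) := by
    intro j hj
    have : n - 1 - j = n - (j + 1) := by omega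
    rw [this]; ring
  rw [Finset.sum_congr rfl this, Finset.sum_neg_distrib]
  linarith [h]

lemma colLemma (n : ℕ) (l : Fin n → ℝ) (i k : Fin n) :
    ∑ j : Fin n, benentiR n l j k * (l i) ^ (n - 1 - (j : ℕ)) =
      l i * (l i) ^ (n - 1 - (k : ℕ)) := by
  by_cases hk : (k : ℕ) = 0
  · have : ∀ j : Fin n, benentiR n l j k = -((-1 : ℝ) ^ ((j : ℕ) + 1) * esym n l ((j : ℕ) + 1)) := by
      intro j; simp [benentiR, hk]
    simp only [this]
    rw [← keyPow n l i, hk]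
    have hn : 0 < n := i.pos
    rw [Nat.sub_zero, ← pow_succ']
    congr 1
    omega
  · have hk1 : 1 ≤ (k : ℕ) := Nat.one_le_iff_ne_zero.mpr hk
    have hkn : (k : ℕ) < n := k.isLt
    set j0 : Fin n := ⟨(k : ℕ) - 1, by omega⟩ with hj0
    rw [Finset.sum_eq_single j0]
    · have : benentiR n l j0 k = 1 := by
        simp only [benentiR, hj0]
        rw [if_neg hk, if_pos (by omega)]
      rw [this, one_mul]
      have h1 : n - 1 - ((j0 : ℕ)) = (n - 1 - (k : ℕ)) + 1 := by
        simp only [hj0]; omega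
      rw [h1, pow_succ]
      ring
    · intro j _ hj
      have : benentiR n l j k = 0 := by
        simp only [benentiR]
        rw [if_neg hk, if_neg]
        intro hc
        apply hj
        apply Fin.ext
        simp only [hj0]
        omega
      rw [this, zero_mul]
    · intro h; exact absurd (Finset.mem_univ j0) h

lemma MRDM (n : ℕ) (l : Fin n → ℝ) :
    benentiM n l * benentiR n l = Matrix.diagonal l * benentiM n l := by
  ext i j
  rw [Matrix.mul_apply, Matrix.diagonal_mul]
  calc ∑ k : Fin n, benentiM n l i k * benentiR n l k j
      = ∑ k : Fin n, benentiR n l k j * (l i) ^ (n - 1 - (k : ℕ)) :=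
        Finset.sum_congr rfl fun k _ => mul_comm _ _
    _ = l i * (l i) ^ (n - 1 - (j : ℕ)) := colLemma n l i j
    _ = l i * benentiM n l i j := rfl

lemma stepLemma (n : ℕ) (l : Fin n → ℝ) (v : Fin n → ℝ) (i : Fin n) :
    ∑ j : Fin n, (benentiR n l *ᵥ v) j * (l i) ^ (n - 1 - (j : ℕ)) =
      l i * ∑ j : Fin n, v j * (l i) ^ (n - 1 - (j : ℕ)) := by
  have h1 : (benentiM n l *ᵥ (benentiR n l *ᵥ v)) i = ((benentiM n l * benentiR n l) *ᵥ v) i := by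
    rw [Matrix.mulVec_mulVec]
  have h2 : ((Matrix.diagonal l * benentiM n l) *ᵥ v) i = l i * (benentiM n l *ᵥ v) i := by
    rw [← Matrix.mulVec_mulVec, Matrix.mulVec_diagonal]
  have hM : ∀ w : Fin n → ℝ, (benentiM n l *ᵥ w) i =
      ∑ j : Fin n, w j * (l i) ^ (n - 1 - (j : ℕ)) := by
    intro w
    simp [Matrix.mulVec, dotProduct, benentiM, mul_comm]
  rw [← hM, h1, MRDM n l, h2, hM]

lemma detM_ne_zero (n : ℕ) (l : Fin n → ℝ) (hdist : Function.Injective l) :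
    (benentiM n l).det ≠ 0 := by
  have hM : benentiM n l = (Matrix.vandermonde l).submatrix id Fin.revPerm := by
    ext i j
    show l i ^ (n - 1 - (j : ℕ)) = l i ^ ((Fin.rev j : Fin n) : ℕ)
    rw [Fin.val_rev]
    congr 1
    omega
  rw [hM, Matrix.det_permute']
  have hv : (Matrix.vandermonde l).det ≠ 0 := by
    rw [Matrix.det_vandermonde]
    refine Finset.prod_ne_zero_iff.mpr fun i _ => Finset.prod_ne_zero_iff.mpr fun j hj => ?_
    have hij : i < j := Finset.mem_Ioi.mp hj
    exact sub_ne_zero.mpr fun h => hij.ne' (hdist h)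
  intro h
  rcases Int.units_eq_one_or (Equiv.Perm.sign (Fin.revPerm : Equiv.Perm (Fin n))) with hs | hs <;>
    rw [hs] at h
  · exact hv (by simpa using h)
  · exact hv (by simpa using h)

lemma detR_isUnit (n : ℕ) (l : Fin n → ℝ) (hdist : Function.Injective l)
    (hne : ∀ i, l i ≠ 0) : IsUnit (benentiR n l).det := by
  have h := congrArg Matrix.det (MRDM n l)
  rw [Matrix.det_mul, Matrix.det_mul, Matrix.det_diagonal] at h
  have hM := detM_ne_zero n l hdist
  have hR : (benentiR n l).det = ∏ i, l i := by
    have h' : (benentiM n l).det * (benentiR n l).det = (benentiM n l).det * ∏ i, l i := by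
      rw [h]; ring
    exact mul_left_cancel₀ hM h'
  rw [hR]
  exact isUnit_iff_ne_zero.mpr (Finset.prod_ne_zero_iff.mpr fun i _ => hne i)

theorem benenti_potentials_satisfy_defining_equations
    (n : ℕ) (hn : 0 < n) (l : Fin n → ℝ)
    (hdist : Function.Injective l) (hne : ∀ i, l i ≠ 0) :
    ∀ (β : ℤ) (i : Fin n),
      (l i) ^ β +
        ∑ j : Fin n, (((benentiR n l) ^ β) *ᵥ (benentiV0 n)) j *
          (l i) ^ ((n : ℤ) - 1 - (j : ℕ)) = 0 := by
  have hdet := detR_isUnit n l hdist hne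
  have key : ∀ β : ℤ, ∀ i : Fin n,
      ∑ j : Fin n, (((benentiR n l) ^ β) *ᵥ (benentiV0 n)) j * (l i) ^ (n - 1 - (j : ℕ)) =
        -(l i) ^ β := by
    intro β
    induction β using Int.induction_on with
    | zero =>
      intro i
      rw [zpow_zero, zpow_zero, Matrix.one_mulVec]
      rw [Finset.sum_eq_single (⟨n - 1, by omega⟩ : Fin n)]
      · have hv : ((⟨n - 1, by omega⟩ : Fin n) : ℕ) = n - 1 := rfl
        simp [benentiV0, hv]
      · intro j _ hj
        have : benentiV0 n j = 0 := by
          simp only [benentiV0]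
          rw [if_neg]
          intro hc
          exact hj (Fin.ext hc)
        rw [this, zero_mul]
      · intro h; exact absurd (Finset.mem_univ _) h
    | succ k ih =>
      intro i
      have hpow : (benentiR n l : Matrix (Fin n) (Fin n) ℝ) ^ ((k : ℤ) + 1) =
          benentiR n l * benentiR n l ^ (k : ℤ) := by
        rw [add_comm, Matrix.zpow_one_add hdet]
      rw [hpow, ← Matrix.mulVec_mulVec, stepLemma, ih i]
      rw [zpow_add_one₀ (hne i)]
      ring
    | pred k ih =>
      intro i
      have hpow : benentiR n l * benentiR n l ^ (-(k : ℤ) - 1) =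
          benentiR n l ^ (-(k : ℤ)) := by
        rw [← Matrix.zpow_one_add hdet]
        congr 1
        ring
      have h := ih i
      rw [← hpow, ← Matrix.mulVec_mulVec, stepLemma] at h
      have hxe : (l i) ^ (-(k : ℤ)) = l i * (l i) ^ (-(k : ℤ) - 1) := by
        rw [mul_comm, ← zpow_add_one₀ (hne i)]
        congr 1
        ring
      rw [hxe] at h
      have := mul_left_cancel₀ (hne i) (by linarith [h] : l i *
        (∑ j : Fin n, ((benentiR n l ^ (-(k : ℤ) - 1)) *ᵥ benentiV0 n) j *
          (l i) ^ (n - 1 - (j : ℕ))) = l i * (-(l i) ^ (-(k : ℤ) - 1)))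
      linarith [this]
  intro β i
  have h := key β i
  have hcast : ∀ j : Fin n, (l i) ^ ((n : ℤ) - 1 - ((j : ℕ) : ℤ)) =
      (l i) ^ ((n - 1 - (j : ℕ) : ℕ)) := by
    intro j
    rw [← zpow_natCast]
    congr 1
    have : (j : ℕ) < n := j.isLt
    omega
  calc (l i) ^ β + ∑ j : Fin n, ((benentiR n l ^ β) *ᵥ benentiV0 n) j *
        (l i) ^ ((n : ℤ) - 1 - (j : ℕ))
      = (l i) ^ β + ∑ j : Fin n, ((benentiR n l ^ β) *ᵥ benentiV0 n) j *
        (l i) ^ ((n - 1 - (j : ℕ) : ℕ)) := by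
        rw [Finset.sum_congr rfl fun j _ => by rw [hcast j]]
    _ = (l i) ^ β + (-(l i) ^ β) := by rw [h]
    _ = 0 := by ring
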